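/- Let F be the Minkowski gauge of a compact convex body K ⊂ ℝⁿ with 0 in its interior, assume F is C¹ on ℝⁿ∖{0}, and let μ be a compactly supported Borel probability measure on ℝⁿ. Then for every x ∈ ℝⁿ and every v ∈ ℝⁿ, the one-sided directional derivative of F_μ at x in direction v exists and equals lim_{t→0⁺} (F_μ(x+tv) − F_μ(x))/t = ⟨D F_{μ_x}(x), v⟩ + μ({x})·F(−v). -/

import Mathlib

open MeasureTheory Metric

/-- One-sided directional derivative of the median functional: for `F`
the Minkowski gauge of a compact convex body (`C¹` away from `0`) and `μ` a compactly
supported Borel probability measure on `ℝⁿ`, at every `x` and in every direction `v`,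
`lim_{t→0⁺} (F_μ(x+tv) - F_μ(x))/t = ⟨D F_{μ_x}(x), v⟩ + μ({x})·F(-v)`,
where `μ_x = μ - μ({x})·δ_x`. -/
theorem median_directional_derivative
    {n : ℕ} (K : Set (EuclideanSpace ℝ (Fin n)))
    (hK_cpt : IsCompact K) (hK_conv : Convex ℝ K)
    (hK_int : (0 : EuclideanSpace ℝ (Fin n)) ∈ interior K)
    (F : EuclideanSpace ℝ (Fin n) → ℝ) (hF : F = gauge K)
    (hFsmooth : ContDiffOn ℝ 1 F {(0 : EuclideanSpace ℝ (Fin n))}ᶜ)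
    (μ : Measure (EuclideanSpace ℝ (Fin n))) [IsProbabilityMeasure μ]
    (hcpt : ∃ s : Set (EuclideanSpace ℝ (Fin n)), IsCompact s ∧ μ sᶜ = 0) :
    ∀ x v : EuclideanSpace ℝ (Fin n),
      Filter.Tendsto
        (fun t : ℝ =>
          ((∫ z, F (z - (x + t • v)) ∂μ) - ∫ z, F (z - x) ∂μ) / t)
        (nhdsWithin 0 (Set.Ioi 0))
        (nhds
          ((fderiv ℝ (fun y => ∫ z, F (z - y) ∂(μ - μ {x} • Measure.dirac x)) x) v +
            (μ {x}).toReal * F (-v))) := by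
  intro x v
  obtain ⟨s, hs_cpt, hs0⟩ := hcpt
  -- basic properties of F
  have hKnhds : K ∈ nhds (0 : EuclideanSpace ℝ (Fin n)) := mem_interior_iff_mem_nhds.mp hK_int
  obtain ⟨r, hr, hball⟩ := Metric.mem_nhds_iff.mp hKnhds
  have habs : Absorbent ℝ K := absorbent_nhds_zero hKnhds
  have hFle : ∀ z, F z ≤ ‖z‖ / r := by
    intro z
    rw [hF]
    exact (gauge_mono (absorbent_ball_zero hr) hball z).trans_eq (gauge_ball hr.le z)
  have htri : ∀ a b, F (a + b) ≤ F a + F b := by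
    rw [hF]; exact gauge_add_le hK_conv habs
  have hF0 : F 0 = 0 := by rw [hF]; exact gauge_zero
  have hFnn : ∀ z, 0 ≤ F z := by rw [hF]; exact gauge_nonneg
  have hFhom : ∀ (t : ℝ), 0 ≤ t → ∀ z, F (t • z) = t * F z := by
    intro t ht z
    rw [hF, gauge_smul_of_nonneg ht, smul_eq_mul]
  have hlipR : ∀ a b, ‖F a - F b‖ ≤ r⁻¹ * ‖a - b‖ := by
    intro a b
    have h1 : ∀ p q : EuclideanSpace ℝ (Fin n), F p - F q ≤ r⁻¹ * ‖p - q‖ := by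
      intro p q
      have := htri (p - q) q
      rw [sub_add_cancel] at this
      have h2 : F (p - q) ≤ ‖p - q‖ / r := hFle _
      rw [div_eq_inv_mul] at h2
      linarith
    rw [Real.norm_eq_abs, abs_sub_le_iff]
    constructor
    · exact h1 a b
    · have := h1 b a; rwa [norm_sub_rev] at this
  have hFcont : Continuous F := by
    have : LipschitzWith (Real.toNNReal r⁻¹) F := by
      refine LipschitzWith.of_dist_le_mul fun a b => ?_
      rw [Real.dist_eq, dist_eq_norm, Real.coe_toNNReal _ (by positivity)]
      exact hlipR a b
    exact this.continuous
  -- measure decomposition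
  set c := μ {x} with hc
  set dx : Measure (EuclideanSpace ℝ (Fin n)) := c • Measure.dirac x with hdx
  have hle : dx ≤ μ := by
    refine Measure.le_iff.mpr fun t ht => ?_
    rw [hdx, Measure.smul_apply, Measure.dirac_apply' _ ht, smul_eq_mul]
    by_cases hxt : x ∈ t
    · simp only [Set.indicator_of_mem hxt, Pi.one_apply, mul_one]
      exact measure_mono (Set.singleton_subset_iff.mpr hxt)
    · simp [Set.indicator_of_notMem hxt]
  have hdxfin : IsFiniteMeasure dx := by
    constructor
    rw [hdx, Measure.smul_apply, smul_eq_mul]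
    exact ENNReal.mul_lt_top (measure_lt_top μ _) (measure_lt_top (Measure.dirac x) _)
  set ν : Measure (EuclideanSpace ℝ (Fin n)) := μ - dx with hν
  have hνle : ν ≤ μ := Measure.sub_le
  have hνfin : IsFiniteMeasure ν := isFiniteMeasure_of_le μ hνle
  have hνx : ν {x} = 0 := by
    rw [hν, Measure.sub_apply (measurableSet_singleton x) hle, hdx, Measure.smul_apply,
      Measure.dirac_apply' _ (measurableSet_singleton x)]
    simp [hc]
  have hνs : ν sᶜ = 0 := le_antisymm (le_trans (hνle sᶜ) hs0.le) zero_le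
  have hadd : ν + dx = μ := Measure.sub_add_cancel_of_le hle
  -- integrability
  obtain ⟨R, hR⟩ := isBounded_iff_forall_norm_le.mp hs_cpt.isBounded
  have hInt : ∀ (ρ : Measure (EuclideanSpace ℝ (Fin n))) [IsFiniteMeasure ρ], ρ sᶜ = 0 →
      ∀ y, Integrable (fun z => F (z - y)) ρ := by
    intro ρ _ hρ y
    refine Integrable.mono' (integrable_const (r⁻¹ * (R + ‖y‖)))
      ((hFcont.comp (continuous_id.sub continuous_const)).aestronglyMeasurable) ?_
    have hae : ∀ᵐ z ∂ρ, z ∈ s := by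
      rw [MeasureTheory.ae_iff]
      exact hρ
    filter_upwards [hae] with z hz
    rw [Real.norm_eq_abs, abs_of_nonneg (hFnn _)]
    calc F (z - y) ≤ ‖z - y‖ / r := hFle _
      _ ≤ (R + ‖y‖) / r := by
          gcongr
          calc ‖z - y‖ ≤ ‖z‖ + ‖y‖ := norm_sub_le _ _
            _ ≤ R + ‖y‖ := by linarith [hR z hz]
      _ = r⁻¹ * (R + ‖y‖) := by ring
    -- integral splitting
  have hsplit : ∀ y, (∫ z, F (z - y) ∂μ) = (∫ z, F (z - y) ∂ν) + c.toReal * F (x - y) := by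
    intro y
    have hiμ := hInt μ hs0 y
    have h1 : Integrable (fun z => F (z - y)) ν := hiμ.mono_measure hνle
    have h2 : Integrable (fun z => F (z - y)) dx := hiμ.mono_measure hle
    conv_lhs => rw [← hadd]
    rw [integral_add_measure h1 h2]
    congr 1
    rw [hdx, integral_smul_measure, integral_dirac, smul_eq_mul]
  -- derivative at x of the ν-integral
  set F' : EuclideanSpace ℝ (Fin n) → (EuclideanSpace ℝ (Fin n) →L[ℝ] ℝ) :=
    fun a => -(fderiv ℝ F (a - x)) with hF'
  have h_diff : ∀ᵐ a ∂ν, HasFDerivAt (fun y => F (a - y)) (F' a) x := by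
    have hae : ∀ᵐ a ∂ν, a ≠ x := by
      rw [MeasureTheory.ae_iff]
      simpa using hνx
    filter_upwards [hae] with a ha
    have h0 : a - x ≠ 0 := sub_ne_zero.mpr ha
    have h0' : a - x ∈ ({(0 : EuclideanSpace ℝ (Fin n))}ᶜ : Set _) := h0
    have hd : DifferentiableAt ℝ F (a - x) :=
      (hFsmooth.contDiffAt ((isClosed_singleton.isOpen_compl).mem_nhds h0')).differentiableAt
        one_ne_zero
    have h1 : HasFDerivAt (fun y : EuclideanSpace ℝ (Fin n) => a - y)
        (-(ContinuousLinearMap.id ℝ (EuclideanSpace ℝ (Fin n)))) x := by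
      exact (hasFDerivAt_id (𝕜 := ℝ) x).const_sub a
    have h2 := (hd.hasFDerivAt).comp x h1
    refine h2.congr_fderiv ?_
    ext w
    simp [hF']
  have hmeas' : AEStronglyMeasurable F' ν :=
    (((measurable_fderiv ℝ F).comp (measurable_id.sub measurable_const)).neg).aestronglyMeasurable
  have h_lip : ∀ᵐ a ∂ν, ∀ y ∈ ball x 1,
      ‖F (a - y) - F (a - x)‖ ≤ (fun _ : EuclideanSpace ℝ (Fin n) => r⁻¹) a * ‖y - x‖ := by
    refine Filter.Eventually.of_forall fun a y _ => ?_
    have h := hlipR (a - y) (a - x)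
    have he : (a - y) - (a - x) = x - y := by abel
    rw [he] at h
    rwa [norm_sub_rev x y] at h
  have hmeasF : ∀ y ∈ ball x 1, AEStronglyMeasurable (fun z => F (z - y)) ν := fun y _ =>
    (hFcont.comp (continuous_id.sub continuous_const)).aestronglyMeasurable
  obtain ⟨hF'int, hD⟩ := hasFDerivAt_integral_of_dominated_loc_of_lip' (𝕜 := ℝ) (μ := ν)
    (F := fun (y z : EuclideanSpace ℝ (Fin n)) => F (z - y)) (F' := F') (x₀ := x) (bound := fun _ => r⁻¹)
    (ball_mem_nhds x one_pos) hmeasF (hInt ν hνs x) hmeas' h_lip (integrable_const _) h_diff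
  -- the slope limit for the ν-part
  set D := ∫ a, F' a ∂ν with hDdef
  have hphi : HasDerivAt (fun t : ℝ => ∫ z, F (z - (x + t • v)) ∂ν) (D v) 0 := by
    have h1 : HasDerivAt (fun t : ℝ => x + t • v) v 0 := by
      simpa using ((hasDerivAt_id (0 : ℝ)).smul_const v).const_add x
    have hD' : HasFDerivAt (fun y => ∫ z, F (z - y) ∂ν) D (x + (0 : ℝ) • v) := by
      simpa using hD
    simpa [Function.comp_def] using hD'.comp_hasDerivAt 0 h1
  have hslope : Filter.Tendsto
      (fun t : ℝ => ((∫ z, F (z - (x + t • v)) ∂ν) - ∫ z, F (z - x) ∂ν) / t)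
      (nhdsWithin 0 (Set.Ioi 0)) (nhds (D v)) := by
    have h1 := hasDerivAt_iff_tendsto_slope.mp hphi
    have h2 : Filter.Tendsto (slope (fun t : ℝ => ∫ z, F (z - (x + t • v)) ∂ν) 0)
        (nhdsWithin 0 (Set.Ioi 0)) (nhds (D v)) :=
      h1.mono_left (nhdsWithin_mono 0 fun t ht => ne_of_gt ht)
    refine h2.congr fun t => ?_
    rw [slope_def_field]
    simp
  -- rewrite the target
  rw [hD.fderiv]
  have hfinal := hslope.add_const (c.toReal * F (-v))
  refine hfinal.congr' ?_
  filter_upwards [self_mem_nhdsWithin] with t ht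
  have ht0 : (0 : ℝ) < t := ht
  have hxy : x - (x + t • v) = t • (-v) := by
    rw [smul_neg]; abel
  rw [hsplit (x + t • v), hsplit x, hxy, hFhom t ht0.le (-v), sub_self, hF0, mul_zero, add_zero]
  field_simp
  ring
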